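/- Let I ⊆ ℝ be an open interval, g : I → Matₙ(ℝ) twice differentiable with g(u) invertible for all u ∈ I, and H : I → Matₙ(ℝ) three times differentiable with H'(u) = g(u)⁻¹ for all u ∈ I. Then for every u ∈ I the Lagrangian Schwarzian identity holds: H'(u)⁻¹·( H'''(u) − (3/2)·H''(u)·H'(u)⁻¹·H''(u) )·H'(u)⁻¹ = −g''(u) + (1/2)·g'(u)·g(u)⁻¹·g'(u). -/

import Mathlib

open Matrix Set

attribute [local instance] Matrix.frobeniusNormedAddCommGroup Matrix.frobeniusNormedSpace
attribute [local instance] Matrix.frobeniusNormedRing Matrix.frobeniusNormedAlgebra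

section Aux

variable {R : Type*} [NormedRing R] [HasSummableGeomSeries R] [NormedAlgebra ℝ R]

lemma aux_hasDerivAt_inverse {c : ℝ → R} {c' : R} {x : ℝ}
    (hc : HasDerivAt c c' x) (hx : IsUnit (c x)) :
    HasDerivAt (fun y => Ring.inverse (c y))
      (-(Ring.inverse (c x) * c' * Ring.inverse (c x))) x := by
  obtain ⟨u, hu⟩ := hx
  have hf : HasFDerivAt Ring.inverse
      (-(ContinuousLinearMap.mulLeftRight ℝ R ↑u⁻¹ ↑u⁻¹)) (c x) :=
    hu ▸ hasFDerivAt_ringInverse u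
  have h := hf.comp_hasDerivAt x hc
  have hval : Ring.inverse (c x) = (↑u⁻¹ : R) := by rw [← hu, Ring.inverse_unit]
  rw [hval]; exact h

lemma aux_algebra {S : Type*} [Ring S] [Module ℝ S] [SMulCommClass ℝ S S]
    [IsScalarTower ℝ S S] (A iA B C : S) (h1 : A * iA = 1) (h2 : iA * A = 1) :
    A * ((-((-(iA * B * iA)) * B * iA + iA * C * iA + iA * B * (-(iA * B * iA))))
        - (3/2 : ℝ) • ((-(iA * B * iA)) * A * (-(iA * B * iA)))) * A
      = -C + (1/2 : ℝ) • (B * iA * B) := by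
  have h1' : ∀ X : S, A * (iA * X) = X := fun X => by rw [← mul_assoc, h1, one_mul]
  have h2' : ∀ X : S, iA * (A * X) = X := fun X => by rw [← mul_assoc, h2, one_mul]
  have h1'' : ∀ X : S, X * iA * A = X := fun X => by rw [mul_assoc, h2, mul_one]
  simp only [mul_neg, neg_mul, neg_neg, mul_sub, sub_mul, mul_add, add_mul,
    mul_smul_comm, smul_mul_assoc, mul_assoc, h1', h2']
  simp only [← mul_assoc, h1'']
  module

end Aux

/-- the Lagrangian Schwarzian identity.  If `g` is twice differentiable with
invertible values on the open interval `(a,b)` and `H` is a three times differentiable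
primitive of `g⁻¹` (so `H' = g⁻¹`, with second and third derivatives `H''`, `H'''`), then
`H'⁻¹ (H''' − (3/2) H'' H'⁻¹ H'') H'⁻¹ = −g'' + (1/2) g' g⁻¹ g'`. -/
theorem lagrangian_schwarzian_identity {n : ℕ} (a b : ℝ)
    (g g' g'' H H'' H''' : ℝ → Matrix (Fin n) (Fin n) ℝ)
    (hginv : ∀ u ∈ Set.Ioo a b, IsUnit (g u))
    (hg : ∀ u ∈ Set.Ioo a b, HasDerivAt g (g' u) u)
    (hg' : ∀ u ∈ Set.Ioo a b, HasDerivAt g' (g'' u) u)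
    (hH : ∀ u ∈ Set.Ioo a b, HasDerivAt H ((g u)⁻¹) u)
    (hH'' : ∀ u ∈ Set.Ioo a b, HasDerivAt (fun w => (g w)⁻¹) (H'' u) u)
    (hH''' : ∀ u ∈ Set.Ioo a b, HasDerivAt H'' (H''' u) u) :
    ∀ u ∈ Set.Ioo a b,
      ((g u)⁻¹)⁻¹ * (H''' u - (3/2 : ℝ) • (H'' u * ((g u)⁻¹)⁻¹ * H'' u)) * ((g u)⁻¹)⁻¹
      = -(g'' u) + (1/2 : ℝ) • (g' u * (g u)⁻¹ * g' u) := by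
  intro u hu
  -- the derivative of w ↦ (g w)⁻¹ at any point of the interval
  have hinv : ∀ w ∈ Set.Ioo a b,
      HasDerivAt (fun w => (g w)⁻¹) (-((g w)⁻¹ * g' w * (g w)⁻¹)) w := by
    intro w hw
    have := aux_hasDerivAt_inverse (hg w hw) (hginv w hw)
    simp only [← Matrix.nonsing_inv_eq_ringInverse] at this
    exact this
  -- identify H''
  have hH''eq : ∀ w ∈ Set.Ioo a b, H'' w = -((g w)⁻¹ * g' w * (g w)⁻¹) := fun w hw =>
    (hH'' w hw).unique (hinv w hw)
  -- H'' agrees with the explicit formula near u, so H''' u is its derivative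
  have hmem : Set.Ioo a b ∈ nhds u := (isOpen_Ioo).mem_nhds hu
  have hev : (fun w => -((g w)⁻¹ * g' w * (g w)⁻¹)) =ᶠ[nhds u] H'' := by
    filter_upwards [hmem] with w hw using (hH''eq w hw).symm
  have hd3 : HasDerivAt (fun w => -((g w)⁻¹ * g' w * (g w)⁻¹)) (H''' u) u :=
    (hH''' u hu).congr_of_eventuallyEq hev
  -- compute the derivative of the explicit formula
  have hd3' : HasDerivAt (fun w => -((g w)⁻¹ * g' w * (g w)⁻¹))
      (-(((-((g u)⁻¹ * g' u * (g u)⁻¹)) * g' u * (g u)⁻¹)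
        + ((g u)⁻¹ * g'' u * (g u)⁻¹)
        + ((g u)⁻¹ * g' u * (-((g u)⁻¹ * g' u * (g u)⁻¹))))) u := by
    have h1 := ((hinv u hu).mul (hg' u hu)).mul (hinv u hu)
    have := h1.neg
    refine this.congr_deriv ?_
    simp only [Pi.mul_apply]
    noncomm_ring
  have hH'''eq : H''' u =
      -(((-((g u)⁻¹ * g' u * (g u)⁻¹)) * g' u * (g u)⁻¹)
        + ((g u)⁻¹ * g'' u * (g u)⁻¹)
        + ((g u)⁻¹ * g' u * (-((g u)⁻¹ * g' u * (g u)⁻¹)))) := hd3.unique hd3'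
  -- inverse facts
  have hdet : IsUnit (g u).det := (Matrix.isUnit_iff_isUnit_det _).mp (hginv u hu)
  have hinvinv : ((g u)⁻¹)⁻¹ = g u := Matrix.nonsing_inv_nonsing_inv _ hdet
  have h1 : g u * (g u)⁻¹ = 1 := Matrix.mul_nonsing_inv _ hdet
  have h2 : (g u)⁻¹ * g u = 1 := Matrix.nonsing_inv_mul _ hdet
  rw [hinvinv, hH'''eq, hH''eq u hu]
  exact aux_algebra (g u) ((g u)⁻¹) (g' u) (g'' u) h1 h2
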